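/- There is no 3-connected locally nonforesty graph of order 8k+1 (k ≥ 1) and size 15k+2. -/

import Mathlib

open SimpleGraph Finset

section Helpers
variable {V : Type*}

lemma walk_support_const {G : SimpleGraph V} {X : Type*} (f : V → X)
    (hf : ∀ a b, G.Adj a b → f a = f b) :
    ∀ {a b : V} (p : G.Walk a b), ∀ x ∈ p.support, f x = f a := by
  intro a b p
  induction p with
  | nil => intro x hx; simp at hx; subst hx; rfl
  | cons h p ih =>
    intro x hx
    rw [SimpleGraph.Walk.support_cons] at hx
    rcases List.mem_cons.mp hx with h' | h'
    · subst h'; rfl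
    · exact (ih x h').trans (hf _ _ h).symm

lemma cycle_three_same {W : Type*} {H : SimpleGraph W} (hH : ¬ H.IsAcyclic)
    {X : Type*} (f : W → X) (hf : ∀ a b, H.Adj a b → f a = f b) :
    ∃ x y z : W, x ≠ y ∧ x ≠ z ∧ y ≠ z ∧ f y = f x ∧ f z = f x := by
  classical
  simp only [SimpleGraph.IsAcyclic, not_forall, not_not] at hH
  obtain ⟨v, c, hc⟩ := hH
  have hn : c.support.tail.Nodup := hc.support_nodup
  have hlen : 3 ≤ c.length := hc.three_le_length
  have hcard : 3 ≤ c.support.tail.toFinset.card := by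
    rw [List.toFinset_card_of_nodup hn]
    have := SimpleGraph.Walk.length_support c
    have : c.support.tail.length = c.length := by
      have h1 : c.support.length = c.length + 1 := SimpleGraph.Walk.length_support c
      have h2 : c.support.tail.length = c.support.length - 1 := List.length_tail
      omega
    omega
  obtain ⟨x, hx, y, hy, z, hz, hxy, hxz, hyz⟩ := Finset.two_lt_card.mp (show 2 < c.support.tail.toFinset.card by omega)
  have hsub : ∀ w ∈ c.support.tail.toFinset, w ∈ c.support := by
    intro w hw
    exact List.tail_subset _ (List.mem_toFinset.mp hw)
  refine ⟨x, y, z, hxy, hxz, hyz, ?_, ?_⟩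
  · rw [walk_support_const f hf c x (hsub x hx), walk_support_const f hf c y (hsub y hy)]
  · rw [walk_support_const f hf c x (hsub x hx), walk_support_const f hf c z (hsub z hz)]

lemma notAcyclic_three_le_card {W : Type*} [Fintype W] (H : SimpleGraph W)
    (hH : ¬ H.IsAcyclic) : 3 ≤ Fintype.card W := by
  classical
  obtain ⟨x, y, z, hxy, hxz, hyz, -, -⟩ := cycle_three_same hH (fun _ => (0:ℕ)) (fun _ _ _ => rfl)
  have : ({x, y, z} : Finset W).card = 3 := by
    rw [Finset.card_insert_of_notMem (by simp [hxy, hxz]),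
      Finset.card_insert_of_notMem (by simp [hyz]), Finset.card_singleton]
  calc 3 = ({x, y, z} : Finset W).card := this.symm
    _ ≤ _ := by simpa using Finset.card_le_univ _

lemma complete_of_notAcyclic {W : Type*} [Fintype W] (H : SimpleGraph W)
    (hcard : Fintype.card W = 3) (hH : ¬ H.IsAcyclic) : ∀ a b : W, a ≠ b → H.Adj a b := by
  classical
  simp only [SimpleGraph.IsAcyclic, not_forall, not_not] at hH
  obtain ⟨v, c, hc⟩ := hH
  have h3 : 3 ≤ H.edgeFinset.card := by
    have hnd : c.edges.Nodup := hc.edges_nodup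
    have hlen : c.edges.length = c.length := SimpleGraph.Walk.length_edges c
    have hsub : c.edges.toFinset ⊆ H.edgeFinset := by
      intro e he
      rw [SimpleGraph.mem_edgeFinset]
      exact c.edges_subset_edgeSet (List.mem_toFinset.mp he)
    calc 3 ≤ c.edges.toFinset.card := by
            rw [List.toFinset_card_of_nodup hnd, hlen]; exact hc.three_le_length
      _ ≤ _ := Finset.card_le_card hsub
  have htop : H.edgeFinset = (⊤ : SimpleGraph W).edgeFinset := by
    apply Finset.eq_of_subset_of_card_le (SimpleGraph.edgeFinset_mono le_top)
    rw [SimpleGraph.card_edgeFinset_top_eq_card_choose_two, hcard]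
    exact h3
  intro a b hab
  have : s(a, b) ∈ (⊤ : SimpleGraph W).edgeFinset := by
    rw [SimpleGraph.mem_edgeFinset, SimpleGraph.edgeSet_top]
    exact hab
  rw [← htop, SimpleGraph.mem_edgeFinset] at this
  exact this

lemma walk_mem_closed {G : SimpleGraph V} {T : Set V} (C : Set V)
    (hC : ∀ x y, G.Adj x y → x ∈ C → y ∈ T → y ∈ C) :
    ∀ {a b : T} (p : (G.induce T).Walk a b), (a : V) ∈ C → (b : V) ∈ C := by
  intro a b p
  induction p with
  | nil => exact id
  | cons h p ih =>
    intro ha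
    exact ih (hC _ _ h ha (Subtype.mem _))

lemma exists_not_mem_finset [Fintype V] (s : Finset V) (h : s.card < Fintype.card V) :
    ∃ z, z ∉ s := by
  by_contra hno
  push_neg at hno
  have := Finset.card_le_card (fun z _ => hno z : Finset.univ ⊆ s)
  rw [Finset.card_univ] at this
  omega

lemma eq_three [DecidableEq V] {s : Finset V} {x y z : V} (hc : s.card = 3)
    (hx : x ∈ s) (hy : y ∈ s) (hz : z ∈ s) (hxy : x ≠ y) (hxz : x ≠ z) (hyz : y ≠ z) :
    s = {x, y, z} := by
  refine (Finset.eq_of_subset_of_card_le ?_ ?_).symm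
  · intro w hw
    simp only [Finset.mem_insert, Finset.mem_singleton] at hw
    rcases hw with rfl | rfl | rfl <;> assumption
  · rw [hc, Finset.card_insert_of_notMem (by simp [hxy, hxz]),
      Finset.card_insert_of_notMem (by simp [hyz]), Finset.card_singleton]

lemma eq_four [DecidableEq V] {s : Finset V} {x y z w : V} (hc : s.card = 4)
    (hx : x ∈ s) (hy : y ∈ s) (hz : z ∈ s) (hw : w ∈ s)
    (hxy : x ≠ y) (hxz : x ≠ z) (hxw : x ≠ w) (hyz : y ≠ z) (hyw : y ≠ w) (hzw : z ≠ w) :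
    s = {x, y, z, w} := by
  refine (Finset.eq_of_subset_of_card_le ?_ ?_).symm
  · intro u hu
    simp only [Finset.mem_insert, Finset.mem_singleton] at hu
    rcases hu with rfl | rfl | rfl | rfl <;> assumption
  · rw [hc, Finset.card_insert_of_notMem (by simp [hxy, hxz, hxw]),
      Finset.card_insert_of_notMem (by simp [hyz, hyw]),
      Finset.card_insert_of_notMem (by simp [hzw]), Finset.card_singleton]

lemma no_closed_set [Fintype V] [DecidableEq V] {G : SimpleGraph V}
    (hconn : ∀ S : Finset V, S.card ≤ 2 → (G.induce ((↑S : Set V)ᶜ)).Connected)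
    (S : Finset V) (hS : S.card ≤ 2) (C : Finset V)
    (hclosed : ∀ x ∈ C, ∀ y, G.Adj x y → y ∈ C ∨ y ∈ S)
    (a : V) (ha : a ∈ C) (haS : a ∉ S)
    (hsmall : (C ∪ S).card < Fintype.card V) : False := by
  classical
  obtain ⟨z, hz⟩ := exists_not_mem_finset (C ∪ S) hsmall
  rw [Finset.mem_union] at hz
  push_neg at hz
  obtain ⟨hzC, hzS⟩ := hz
  have hr := (hconn S hS).preconnected ⟨a, by simpa using haS⟩ ⟨z, by simpa using hzS⟩
  obtain ⟨p⟩ := hr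
  have hmem := walk_mem_closed (↑C : Set V)
    (fun x y hxy hx hyT => by
      rcases hclosed x (by simpa using hx) y hxy with h | h
      · simpa using h
      · exact absurd (by simpa using h : y ∈ (↑S : Set V)) (by simpa using hyT))
    p (by simpa using ha)
  exact hzC (by simpa using hmem)

end Helpers

def LocallyNonforesty {V : Type*} (G : SimpleGraph V) : Prop :=
  ∀ v : V, ¬ (G.induce (G.neighborSet v)).IsAcyclic

def ThreeConnected {V : Type*} [Fintype V] (G : SimpleGraph V) : Prop :=
  4 ≤ Fintype.card V ∧ ∀ S : Finset V, S.card ≤ 2 → (G.induce ((↑S : Set V)ᶜ)).Connected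

set_option maxHeartbeats 1000000 in
theorem stmt11 (k : ℕ) (hk : 1 ≤ k) :
    ¬ ∃ G : SimpleGraph (Fin (8 * k + 1)), ThreeConnected G ∧ LocallyNonforesty G ∧
      G.edgeSet.ncard = 15 * k + 2 := by
  rintro ⟨G, ⟨-, hconn⟩, hloc, hsize⟩
  classical
  haveI : DecidableRel G.Adj := Classical.decRel _
  have hV : Fintype.card (Fin (8 * k + 1)) = 8 * k + 1 := by simp
  have hn9 : 9 ≤ Fintype.card (Fin (8 * k + 1)) := by omega
  -- edge count
  have hedge : G.edgeFinset.card = 15 * k + 2 := by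
    rw [← hsize, Set.ncard_eq_toFinset_card']; congr 1
  have hsum : ∑ v, G.degree v = 30 * k + 4 := by
    rw [SimpleGraph.sum_degrees_eq_twice_card_edges, hedge]; ring
  -- min degree 3
  have mindeg : ∀ v, 3 ≤ G.degree v := by
    intro v
    have h := notAcyclic_three_le_card _ (hloc v)
    rwa [SimpleGraph.card_neighborSet_eq_degree] at h
  -- neighborhoods of degree-3 vertices are triangles
  have triangle : ∀ v a b : Fin (8 * k + 1),
      G.degree v = 3 → G.Adj v a → G.Adj v b → a ≠ b → G.Adj a b := by
    intro v a b hdeg ha hb hab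
    have hcard3 : Fintype.card ↥(G.neighborSet v) = 3 := by
      rw [SimpleGraph.card_neighborSet_eq_degree]; exact hdeg
    have h := complete_of_notAcyclic (G.induce (G.neighborSet v)) hcard3 (hloc v)
      ⟨a, ha⟩ ⟨b, hb⟩ (fun h => hab (congrArg Subtype.val h))
    exact h
  -- structure of a degree-3 neighborhood
  have threeNbrs : ∀ v a : Fin (8 * k + 1), G.degree v = 3 → G.Adj v a →
      ∃ p q, G.neighborFinset v = {a, p, q} ∧ p ≠ q ∧ a ≠ p ∧ a ≠ q ∧
        G.Adj v p ∧ G.Adj v q := by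
    intro v a h3 ha
    have hamem : a ∈ G.neighborFinset v := by rwa [SimpleGraph.mem_neighborFinset]
    have hdeg : (G.neighborFinset v).card = 3 := h3
    have hcard : ((G.neighborFinset v).erase a).card = 2 := by
      rw [Finset.card_erase_of_mem hamem, hdeg]
    obtain ⟨p, hp, q, hq, hpq⟩ :=
      Finset.one_lt_card.mp (by omega : 1 < ((G.neighborFinset v).erase a).card)
    have hap : a ≠ p := (Finset.ne_of_mem_erase hp).symm
    have haq : a ≠ q := (Finset.ne_of_mem_erase hq).symm
    have hpN : p ∈ G.neighborFinset v := Finset.mem_of_mem_erase hp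
    have hqN : q ∈ G.neighborFinset v := Finset.mem_of_mem_erase hq
    exact ⟨p, q, eq_three hdeg hamem hpN hqN hap haq hpq, hpq, hap, haq,
      by rwa [SimpleGraph.mem_neighborFinset] at hpN, by rwa [SimpleGraph.mem_neighborFinset] at hqN⟩
  -- degree-3 vertices form an independent set
  have indep : ∀ u v : Fin (8 * k + 1), G.degree u = 3 → G.degree v = 3 → ¬ G.Adj u v := by
    intro u v hu hv hadj
    obtain ⟨b, c, hNv, hbc, hub, huc, hvb, hvc⟩ := threeNbrs v u hv (G.adj_symm hadj)
    have hub' : G.Adj u b := triangle v u b hv (G.adj_symm hadj) hvb hub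
    have huc' : G.Adj u c := triangle v u c hv (G.adj_symm hadj) hvc huc
    have hvu : v ≠ u := G.ne_of_adj (G.adj_symm hadj)
    have hvb' : v ≠ b := G.ne_of_adj hvb
    have hvc' : v ≠ c := G.ne_of_adj hvc
    have hNu : G.neighborFinset u = {v, b, c} :=
      eq_three hu (by rwa [SimpleGraph.mem_neighborFinset])
        (by rwa [SimpleGraph.mem_neighborFinset]) (by rwa [SimpleGraph.mem_neighborFinset])
        hvb' hvc' hbc
    refine no_closed_set hconn {b, c} (Finset.card_insert_le _ _ |>.trans (by simp))
      {u, v} ?_ u (by simp) ?_ ?_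
    · intro x hx y hxy
      rw [Finset.mem_insert, Finset.mem_singleton] at hx
      rcases hx with rfl | rfl
      · have hy : y ∈ G.neighborFinset x := by rwa [SimpleGraph.mem_neighborFinset]
        rw [hNu] at hy
        simp only [Finset.mem_insert, Finset.mem_singleton] at hy
        rcases hy with rfl | rfl | rfl
        · exact Or.inl (by simp)
        · exact Or.inr (by simp)
        · exact Or.inr (by simp)
      · have hy : y ∈ G.neighborFinset x := by rwa [SimpleGraph.mem_neighborFinset]
        rw [hNv] at hy
        simp only [Finset.mem_insert, Finset.mem_singleton] at hy
        rcases hy with rfl | rfl | rfl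
        · exact Or.inl (by simp)
        · exact Or.inr (by simp)
        · exact Or.inr (by simp)
    · simp only [Finset.mem_insert, Finset.mem_singleton]
      push_neg
      exact ⟨hub, huc⟩
    · have h1 : (({u, v} : Finset (Fin (8 * k + 1))) ∪ {b, c}).card ≤ 4 := by
        apply (Finset.card_union_le _ _).trans
        have h1 : ({u, v} : Finset (Fin (8 * k + 1))).card ≤ 2 :=
          Finset.card_insert_le _ _ |>.trans (by simp)
        have h2 : ({b, c} : Finset (Fin (8 * k + 1))).card ≤ 2 :=
          Finset.card_insert_le _ _ |>.trans (by simp)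
        omega
      omega
  -- the set of degree-3 vertices
  set A : Finset (Fin (8 * k + 1)) := Finset.univ.filter (fun v => G.degree v = 3) with hA
  have hAmem : ∀ v, v ∈ A ↔ G.degree v = 3 := by intro v; simp [hA]
  -- number of degree-3 neighbors
  set aa : Fin (8 * k + 1) → ℕ := fun w => (G.neighborFinset w ∩ A).card with haa
  have hsumA : ∑ w, aa w = 3 * A.card := by
    have h1 : ∀ w, aa w = ∑ u ∈ A, if G.Adj w u then 1 else 0 := by
      intro w
      have h2 : G.neighborFinset w ∩ A = A.filter (fun u => G.Adj w u) := by
        ext u; simp [SimpleGraph.mem_neighborFinset, and_comm]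
      show (G.neighborFinset w ∩ A).card = _
      rw [h2, Finset.card_filter]
    calc ∑ w, aa w = ∑ w, ∑ u ∈ A, (if G.Adj w u then 1 else 0) :=
          Finset.sum_congr rfl (fun w _ => h1 w)
      _ = ∑ u ∈ A, ∑ w, (if G.Adj w u then 1 else 0) := Finset.sum_comm
      _ = ∑ u ∈ A, G.degree u := by
          refine Finset.sum_congr rfl (fun u hu => ?_)
          rw [← Finset.card_filter]
          have : Finset.univ.filter (fun w => G.Adj w u) = G.neighborFinset u := by
            ext w; simp [SimpleGraph.mem_neighborFinset, SimpleGraph.adj_comm]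
          rw [this]
          rfl
      _ = ∑ _u ∈ A, 3 := Finset.sum_congr rfl (fun u hu => (hAmem u).mp hu)
      _ = 3 * A.card := by rw [Finset.sum_const, smul_eq_mul, mul_comm]
  have aA0 : ∀ v ∈ A, aa v = 0 := by
    intro v hv
    rw [haa, Finset.card_eq_zero]
    rw [Finset.eq_empty_iff_forall_notMem]
    intro u hu
    rw [Finset.mem_inter, SimpleGraph.mem_neighborFinset] at hu
    exact indep v u ((hAmem v).mp hv) ((hAmem u).mp hu.2) hu.1
  -- P1 : a vertex with a degree-3 neighbor has two more non-degree-3 neighbors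
  have P1 : ∀ w, 1 ≤ aa w → aa w + 2 ≤ G.degree w := by
    intro w hw
    obtain ⟨v, hv⟩ := Finset.card_pos.mp hw
    rw [Finset.mem_inter, SimpleGraph.mem_neighborFinset] at hv
    obtain ⟨hwv, hvA⟩ := hv
    have hv3 : G.degree v = 3 := (hAmem v).mp hvA
    obtain ⟨p, q, hNv, hpq, hwp, hwq, hvp, hvq⟩ := threeNbrs v w hv3 (G.adj_symm hwv)
    have hpA : p ∉ A := fun h => indep v p hv3 ((hAmem p).mp h) hvp
    have hqA : q ∉ A := fun h => indep v q hv3 ((hAmem q).mp h) hvq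
    have hwp' : G.Adj w p := triangle v w p hv3 (G.adj_symm hwv) hvp hwp
    have hwq' : G.Adj w q := triangle v w q hv3 (G.adj_symm hwv) hvq hwq
    have hsub : insert p (insert q (G.neighborFinset w ∩ A)) ⊆ G.neighborFinset w := by
      intro x hx
      simp only [Finset.mem_insert] at hx
      rcases hx with rfl | rfl | hx
      · rwa [SimpleGraph.mem_neighborFinset]
      · rwa [SimpleGraph.mem_neighborFinset]
      · exact Finset.mem_of_mem_inter_left hx
    have hq1 : q ∉ G.neighborFinset w ∩ A := fun h => hqA (Finset.mem_of_mem_inter_right h)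
    have hp1 : p ∉ insert q (G.neighborFinset w ∩ A) := by
      simp only [Finset.mem_insert]
      push_neg
      exact ⟨hpq, fun h => hpA (Finset.mem_of_mem_inter_right h)⟩
    have hcard : (insert p (insert q (G.neighborFinset w ∩ A))).card = aa w + 2 := by
      rw [Finset.card_insert_of_notMem hp1, Finset.card_insert_of_notMem hq1]
    calc aa w + 2 = _ := hcard.symm
      _ ≤ (G.neighborFinset w).card := Finset.card_le_card hsub
      _ = G.degree w := rfl
  -- P2 : a degree-4 vertex has at most one degree-3 neighbor
  have P2 : ∀ w, G.degree w = 4 → aa w ≤ 1 := by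
    intro w hw4
    by_contra hcon
    push_neg at hcon
    obtain ⟨v, hv, v', hv', hvv'⟩ := Finset.one_lt_card.mp hcon
    rw [Finset.mem_inter, SimpleGraph.mem_neighborFinset] at hv hv'
    obtain ⟨hwv, hvA⟩ := hv
    obtain ⟨hwv', hvA'⟩ := hv'
    have hv3 : G.degree v = 3 := (hAmem v).mp hvA
    have hv3' : G.degree v' = 3 := (hAmem v').mp hvA'
    obtain ⟨p, q, hNv, hpq, hwp, hwq, hvp, hvq⟩ := threeNbrs v w hv3 (G.adj_symm hwv)
    obtain ⟨p', q', hNv', hpq', hwp', hwq', hvp', hvq'⟩ := threeNbrs v' w hv3' (G.adj_symm hwv')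
    have hpA : p ∉ A := fun h => indep v p hv3 ((hAmem p).mp h) hvp
    have hqA : q ∉ A := fun h => indep v q hv3 ((hAmem q).mp h) hvq
    have hpA' : p' ∉ A := fun h => indep v' p' hv3' ((hAmem p').mp h) hvp'
    have hqA' : q' ∉ A := fun h => indep v' q' hv3' ((hAmem q').mp h) hvq'
    have hadjwp : G.Adj w p := triangle v w p hv3 (G.adj_symm hwv) hvp hwp
    have hadjwq : G.Adj w q := triangle v w q hv3 (G.adj_symm hwv) hvq hwq
    have hadjwp' : G.Adj w p' := triangle v' w p' hv3' (G.adj_symm hwv') hvp' hwp'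
    have hadjwq' : G.Adj w q' := triangle v' w q' hv3' (G.adj_symm hwv') hvq' hwq'
    have haaw : aa w = (G.neighborFinset w ∩ A).card := rfl
    -- N(w) \ A has exactly two elements, namely {p, q} = {p', q'}
    have hcards : aa w + (G.neighborFinset w \ A).card = 4 := by
      rw [haa]
      rw [Finset.card_inter_add_card_sdiff]
      exact hw4
    have hsub1 : ({p, q} : Finset (Fin (8 * k + 1))) ⊆ G.neighborFinset w \ A := by
      intro x hx
      simp only [Finset.mem_insert, Finset.mem_singleton] at hx
      rcases hx with rfl | rfl
      · rw [Finset.mem_sdiff, SimpleGraph.mem_neighborFinset]; exact ⟨hadjwp, hpA⟩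
      · rw [Finset.mem_sdiff, SimpleGraph.mem_neighborFinset]; exact ⟨hadjwq, hqA⟩
    have hsub2 : ({p', q'} : Finset (Fin (8 * k + 1))) ⊆ G.neighborFinset w \ A := by
      intro x hx
      simp only [Finset.mem_insert, Finset.mem_singleton] at hx
      rcases hx with rfl | rfl
      · rw [Finset.mem_sdiff, SimpleGraph.mem_neighborFinset]; exact ⟨hadjwp', hpA'⟩
      · rw [Finset.mem_sdiff, SimpleGraph.mem_neighborFinset]; exact ⟨hadjwq', hqA'⟩
    have hc2 : ({p, q} : Finset (Fin (8 * k + 1))).card = 2 := by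
      rw [Finset.card_insert_of_notMem (by simpa using hpq), Finset.card_singleton]
    have hc2' : ({p', q'} : Finset (Fin (8 * k + 1))).card = 2 := by
      rw [Finset.card_insert_of_notMem (by simpa using hpq'), Finset.card_singleton]
    have hsd2 : 2 ≤ (G.neighborFinset w \ A).card := hc2 ▸ Finset.card_le_card hsub1
    have heq1 : ({p, q} : Finset (Fin (8 * k + 1))) = G.neighborFinset w \ A := by
      apply Finset.eq_of_subset_of_card_le hsub1
      omega
    have heq2 : ({p', q'} : Finset (Fin (8 * k + 1))) = G.neighborFinset w \ A := by
      apply Finset.eq_of_subset_of_card_le hsub2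
      omega
    have hNwA : G.neighborFinset w ∩ A = {v, v'} := by
      apply Finset.eq_of_subset_of_card_le _ _ |>.symm
      · intro x hx
        simp only [Finset.mem_insert, Finset.mem_singleton] at hx
        rcases hx with rfl | rfl
        · rw [Finset.mem_inter, SimpleGraph.mem_neighborFinset]; exact ⟨hwv, hvA⟩
        · rw [Finset.mem_inter, SimpleGraph.mem_neighborFinset]; exact ⟨hwv', hvA'⟩
      · have : ({v, v'} : Finset (Fin (8 * k + 1))).card = 2 := by
          rw [Finset.card_insert_of_notMem (by simpa using hvv'), Finset.card_singleton]
        omega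
    -- closed set {v, v', w} with boundary {p, q}
    refine no_closed_set hconn {p, q} (le_of_eq hc2) {v, v', w} ?_ v (by simp) ?_ ?_
    · intro x hx y hxy
      simp only [Finset.mem_insert, Finset.mem_singleton] at hx
      have hyN : y ∈ G.neighborFinset x := by rwa [SimpleGraph.mem_neighborFinset]
      rcases hx with rfl | rfl | rfl
      · rw [hNv] at hyN
        simp only [Finset.mem_insert, Finset.mem_singleton] at hyN
        rcases hyN with rfl | rfl | rfl
        · exact Or.inl (by simp)
        · exact Or.inr (by simp)
        · exact Or.inr (by simp)
      · rw [hNv'] at hyN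
        simp only [Finset.mem_insert, Finset.mem_singleton] at hyN
        rcases hyN with rfl | hyN
        · exact Or.inl (by simp)
        · right
          rw [heq1, ← heq2]
          simpa using hyN
      · by_cases hy : y ∈ A
        · left
          have : y ∈ G.neighborFinset x ∩ A := Finset.mem_inter.mpr ⟨hyN, hy⟩
          rw [hNwA] at this
          simp only [Finset.mem_insert, Finset.mem_singleton] at this
          rcases this with rfl | rfl
          · simp
          · simp
        · right
          rw [heq1]
          exact Finset.mem_sdiff.mpr ⟨hyN, hy⟩
    · simp only [Finset.mem_insert, Finset.mem_singleton]
      push_neg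
      constructor
      · rintro rfl; exact hpA hvA
      · rintro rfl; exact hqA hvA
    · have h5 : (({v, v', w} : Finset (Fin (8 * k + 1))) ∪ {p, q}).card ≤ 5 := by
        apply (Finset.card_union_le _ _).trans
        have h1 : ({v, v', w} : Finset (Fin (8 * k + 1))).card ≤ 3 :=
          (Finset.card_insert_le _ _).trans (by have h := Finset.card_insert_le v' ({w} : Finset (Fin (8 * k + 1))); rw [Finset.card_singleton] at h; omega)
        omega
      omega
  -- integer charge
  set g : Fin (8 * k + 1) → ℤ :=
    fun w => 8 * (G.degree w : ℤ) - 30 - 2 * (aa w : ℤ) with hgdef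
  have e1 : ∑ w, (G.degree w : ℤ) = 30 * k + 4 := by
    rw [← Nat.cast_sum, hsum]; push_cast; ring
  have e2 : ∑ w, (aa w : ℤ) = 3 * A.card := by
    rw [← Nat.cast_sum, hsumA]; push_cast; ring
  have hgtot : ∑ w, g w = 2 - 6 * (A.card : ℤ) := by
    have : ∑ w, g w =
        8 * (∑ w, (G.degree w : ℤ)) - 30 * (Fintype.card (Fin (8 * k + 1)) : ℤ)
          - 2 * (∑ w, (aa w : ℤ)) := by
      rw [Finset.sum_sub_distrib, Finset.sum_sub_distrib, Finset.sum_const,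
        ← Finset.mul_sum, ← Finset.mul_sum, Finset.card_univ]
      push_cast
      ring
    rw [this, e1, e2, hV]
    push_cast
    ring
  have hAg : ∀ w ∈ A, g w = -6 := by
    intro w hw
    have h1 : G.degree w = 3 := (hAmem w).mp hw
    have h2 : aa w = 0 := aA0 w hw
    show 8 * ((G.degree w : ℤ)) - 30 - 2 * ((aa w : ℤ)) = -6
    rw [h1, h2]
    norm_num
  have hAsum : ∑ w ∈ A, g w = -6 * A.card := by
    rw [Finset.sum_congr rfl hAg, Finset.sum_const]
    push_cast
    ring
  have hBsum : ∑ w ∈ Aᶜ, g w = 2 := by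
    have := Finset.sum_add_sum_compl A g
    rw [hAsum, hgtot] at this
    omega
  -- classification of charges in B
  have hBdeg : ∀ w ∈ Aᶜ, 4 ≤ G.degree w := by
    intro w hw
    have h1 := mindeg w
    have h2 : G.degree w ≠ 3 := by
      intro h
      exact (Finset.mem_compl.mp hw) ((hAmem w).mpr h)
    omega
  have haale : ∀ w, aa w ≤ G.degree w := by
    intro w
    exact Finset.card_le_card (Finset.inter_subset_left) |>.trans (le_of_eq rfl)
  have hg0 : ∀ w ∈ Aᶜ, 0 ≤ g w ∧ (g w = 0 → (G.degree w = 4 ∧ aa w = 1)) ∧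
      (g w ≤ 2 → g w = 0 ∨ (g w = 2 ∧ G.degree w = 4 ∧ aa w = 0)) := by
    intro w hw
    have h1 := hBdeg w hw
    have h2 := haale w
    have h3 := P1 w
    have h4 := P2 w
    have h5 : g w = 8 * (G.degree w : ℤ) - 30 - 2 * (aa w : ℤ) := rfl
    omega
  have hnn : ∀ w ∈ Aᶜ, 0 ≤ g w := fun w hw => (hg0 w hw).1
  have hex : ∃ w₀ ∈ Aᶜ, g w₀ ≠ 0 := by
    by_contra hno
    push_neg at hno
    rw [Finset.sum_congr rfl hno] at hBsum
    simp at hBsum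
  obtain ⟨w₀, hw₀B, hw₀ne⟩ := hex
  have hle2 : g w₀ ≤ 2 := by
    have := Finset.single_le_sum hnn hw₀B
    omega
  have hw₀ : G.degree w₀ = 4 ∧ aa w₀ = 0 := by
    rcases (hg0 w₀ hw₀B).2.2 hle2 with h | h
    · exact absurd h hw₀ne
    · exact h.2
  have huniq : ∀ w ∈ Aᶜ, w ≠ w₀ → G.degree w = 4 ∧ aa w = 1 := by
    intro w hw hne
    have hsub : ({w₀, w} : Finset (Fin (8 * k + 1))) ⊆ Aᶜ := by
      intro x hx
      simp only [Finset.mem_insert, Finset.mem_singleton] at hx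
      rcases hx with rfl | rfl <;> assumption
    have hpair : ∑ x ∈ ({w₀, w} : Finset (Fin (8 * k + 1))), g x = g w₀ + g w :=
      Finset.sum_pair (Ne.symm hne)
    have hle : ∑ x ∈ ({w₀, w} : Finset (Fin (8 * k + 1))), g x ≤ ∑ x ∈ Aᶜ, g x :=
      Finset.sum_le_sum_of_subset_of_nonneg hsub (fun i hi _ => hnn i hi)
    have hg2 : g w₀ = 2 := by
      rcases (hg0 w₀ hw₀B).2.2 hle2 with h | h
      · exact absurd h hw₀ne
      · exact h.1
    have hgw : g w = 0 := by
      have h0 := hnn w hw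
      have h1 : g w₀ + g w ≤ 2 := hpair ▸ (hle.trans (le_of_eq hBsum))
      omega
    exact (hg0 w hw).2.1 hgw
  -- endgame: the special vertex w₀
  obtain ⟨hw₀4, hw₀0⟩ := hw₀
  have hw₀A : w₀ ∉ A := by
    intro h
    have := (hAmem w₀).mp h
    omega
  have hNw₀A : ∀ y, G.Adj w₀ y → y ∉ A := by
    intro y hy hyA
    have hmem : y ∈ G.neighborFinset w₀ ∩ A :=
      Finset.mem_inter.mpr ⟨(SimpleGraph.mem_neighborFinset _ _ _).mpr hy, hyA⟩
    have : aa w₀ ≠ 0 := Finset.card_ne_zero_of_mem hmem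
    exact this hw₀0
  have hnbr : ∀ y, G.Adj w₀ y → G.degree y = 4 ∧ aa y = 1 := by
    intro y hy
    refine huniq y (Finset.mem_compl.mpr (hNw₀A y hy)) (G.ne_of_adj hy).symm
  have hkey : ∀ x, G.Adj w₀ x → ∃ v, (G.neighborFinset x ∩ A = {v}) ∧ v ∈ A ∧ G.Adj v x ∧
      (∀ y, G.Adj x y → y = v ∨ y = w₀ ∨ G.Adj v y) := by
    intro x hx
    obtain ⟨hx4, hx1⟩ := hnbr x hx
    obtain ⟨v, hv⟩ := Finset.card_eq_one.mp hx1
    have hvmem : v ∈ G.neighborFinset x ∩ A := hv ▸ Finset.mem_singleton_self v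
    rw [Finset.mem_inter, SimpleGraph.mem_neighborFinset] at hvmem
    obtain ⟨hxv, hvA⟩ := hvmem
    refine ⟨v, hv, hvA, G.adj_symm hxv, ?_⟩
    have hv3 : G.degree v = 3 := (hAmem v).mp hvA
    obtain ⟨p, q, hNv, hpq, hxp, hxq, hvp, hvq⟩ := threeNbrs v x hv3 (G.adj_symm hxv)
    have hxp' : G.Adj x p := triangle v x p hv3 (G.adj_symm hxv) hvp hxp
    have hxq' : G.Adj x q := triangle v x q hv3 (G.adj_symm hxv) hvq hxq
    have hw₀v : v ≠ w₀ := fun h => hw₀A (h ▸ hvA)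
    have hw₀p : p ≠ w₀ := by
      rintro rfl
      exact hNw₀A v (G.adj_symm hvp) hvA
    have hw₀q : q ≠ w₀ := by
      rintro rfl
      exact hNw₀A v (G.adj_symm hvq) hvA
    have hNx : G.neighborFinset x = {v, p, q, w₀} := by
      refine eq_four hx4 ?_ ?_ ?_ ?_ (G.ne_of_adj hvp) (G.ne_of_adj hvq) hw₀v hpq hw₀p hw₀q
      · rwa [SimpleGraph.mem_neighborFinset]
      · rwa [SimpleGraph.mem_neighborFinset]
      · rwa [SimpleGraph.mem_neighborFinset]
      · rw [SimpleGraph.mem_neighborFinset]; exact G.adj_symm hx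
    intro y hy
    have hyN : y ∈ G.neighborFinset x := by rwa [SimpleGraph.mem_neighborFinset]
    rw [hNx] at hyN
    simp only [Finset.mem_insert, Finset.mem_singleton] at hyN
    rcases hyN with rfl | rfl | rfl | rfl
    · exact Or.inl rfl
    · exact Or.inr (Or.inr hvp)
    · exact Or.inr (Or.inr hvq)
    · exact Or.inr (Or.inl rfl)
  -- the A-class function is constant along edges of the neighborhood of w₀
  have hf : ∀ a b : ↥(G.neighborSet w₀), (G.induce (G.neighborSet w₀)).Adj a b →
      G.neighborFinset ↑a ∩ A = G.neighborFinset ↑b ∩ A := by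
    intro a b hab
    have hab' : G.Adj ↑a ↑b := hab
    have haw : G.Adj w₀ ↑a := a.2
    have hbw : G.Adj w₀ ↑b := b.2
    obtain ⟨v, hva, hvA, hvadj, hstr⟩ := hkey ↑a haw
    obtain ⟨v', hvb, hvA', hvadj', hstr'⟩ := hkey ↑b hbw
    rcases hstr ↑b hab' with h | h | h
    · exact absurd (h ▸ hvA) (hNw₀A ↑b hbw)
    · exact absurd h (G.ne_of_adj (G.adj_symm hbw))
    · have : v ∈ G.neighborFinset ↑b ∩ A := by
        rw [Finset.mem_inter, SimpleGraph.mem_neighborFinset]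
        exact ⟨G.adj_symm h, hvA⟩
      rw [hvb, Finset.mem_singleton] at this
      rw [hva, hvb, this]
  obtain ⟨x, y, z, hxy, hxz, hyz, hfy, hfz⟩ := cycle_three_same (hloc w₀) _ hf
  obtain ⟨v, hvx, hvA, hvadjx, hstrx⟩ := hkey ↑x x.2
  have hv3 : G.degree v = 3 := (hAmem v).mp hvA
  have hvy : G.neighborFinset ↑y ∩ A = {v} := hfy.trans hvx
  have hvz : G.neighborFinset ↑z ∩ A = {v} := hfz.trans hvx
  have hvadjy : G.Adj v ↑y := by
    have : v ∈ G.neighborFinset ↑y ∩ A := hvy ▸ Finset.mem_singleton_self v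
    rw [Finset.mem_inter, SimpleGraph.mem_neighborFinset] at this
    exact G.adj_symm this.1
  have hvadjz : G.Adj v ↑z := by
    have : v ∈ G.neighborFinset ↑z ∩ A := hvz ▸ Finset.mem_singleton_self v
    rw [Finset.mem_inter, SimpleGraph.mem_neighborFinset] at this
    exact G.adj_symm this.1
  have hxy' : (↑x : Fin (8 * k + 1)) ≠ ↑y := fun h => hxy (Subtype.ext h)
  have hxz' : (↑x : Fin (8 * k + 1)) ≠ ↑z := fun h => hxz (Subtype.ext h)
  have hyz' : (↑y : Fin (8 * k + 1)) ≠ ↑z := fun h => hyz (Subtype.ext h)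
  have hNv : G.neighborFinset v = {↑x, ↑y, ↑z} := by
    refine eq_three hv3 ?_ ?_ ?_ hxy' hxz' hyz'
    · rwa [SimpleGraph.mem_neighborFinset]
    · rwa [SimpleGraph.mem_neighborFinset]
    · rwa [SimpleGraph.mem_neighborFinset]
  have hvw₀ : v ≠ w₀ := fun h => hw₀A (h ▸ hvA)
  -- the closed set {v, x, y, z} with boundary {w₀}
  have hclosekey : ∀ (t : ↥(G.neighborSet w₀)), G.neighborFinset ↑t ∩ A = {v} →
      ∀ u, G.Adj ↑t u → u ∈ ({v, ↑x, ↑y, ↑z} : Finset (Fin (8 * k + 1))) ∨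
        u ∈ ({w₀} : Finset (Fin (8 * k + 1))) := by
    intro t ht u hu
    obtain ⟨v', hv't, hv'A, hv'adj, hstr'⟩ := hkey ↑t t.2
    have hv'v : v' = v := by
      have : v' ∈ G.neighborFinset ↑t ∩ A := hv't ▸ Finset.mem_singleton_self v'
      rw [ht, Finset.mem_singleton] at this
      exact this
    subst hv'v
    rcases hstr' u hu with rfl | rfl | h
    · exact Or.inl (by simp)
    · exact Or.inr (by simp)
    · left
      have : u ∈ G.neighborFinset v' := by rwa [SimpleGraph.mem_neighborFinset]
      rw [hNv] at this
      simp only [Finset.mem_insert, Finset.mem_singleton] at this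
      simp only [Finset.mem_insert, Finset.mem_singleton]
      exact Or.inr this
  refine no_closed_set hconn {w₀} (by simp) {v, ↑x, ↑y, ↑z} ?_ v (by simp) (by simpa using hvw₀) ?_
  · intro t ht u hu
    simp only [Finset.mem_insert, Finset.mem_singleton] at ht
    rcases ht with rfl | rfl | rfl | rfl
    · left
      have : u ∈ G.neighborFinset t := by rwa [SimpleGraph.mem_neighborFinset]
      rw [hNv] at this
      simp only [Finset.mem_insert, Finset.mem_singleton] at this
      simp only [Finset.mem_insert, Finset.mem_singleton]
      exact Or.inr this
    · exact hclosekey x hvx u hu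
    · exact hclosekey y hvy u hu
    · exact hclosekey z hvz u hu
  · have h5 : (({v, ↑x, ↑y, ↑z} : Finset (Fin (8 * k + 1))) ∪ {w₀}).card ≤ 5 := by
      apply (Finset.card_union_le _ _).trans
      have h1 : ({v, ↑x, ↑y, ↑z} : Finset (Fin (8 * k + 1))).card ≤ 4 := by
        apply (Finset.card_insert_le _ _).trans
        have := Finset.card_insert_le (↑x : Fin (8 * k + 1)) ({↑y, ↑z} : Finset (Fin (8 * k + 1)))
        have h2 := Finset.card_insert_le (↑y : Fin (8 * k + 1)) ({↑z} : Finset (Fin (8 * k + 1)))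
        simp only [Finset.card_singleton] at *
        omega
      simp only [Finset.card_singleton]
      omega
    omega
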